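/- Let F ⊆ 2^[n] be s-saturated and G := { [n]\A : A ∉ F }. For each G ∈ G fix a decomposition G = X_G ⊔ Y_G into two disjoint sets, each a (possibly empty) disjoint union of members of F, and define w_G(x) := ∏_{j∈X_G} x_j · ∏_{j∈Y_G} (1−x_j). Then for distinct G_1, G_2 ∈ G we have w_{G_1} ≠ w_{G_2} as functions on {0,1}^n. -/

import Mathlib

open Finset
open scoped Classical

noncomputable section

/-- `F` contains `s` pairwise disjoint sets (a matching of size `s`). -/
def HasMatching {n : ℕ} (s : ℕ) (F : Finset (Finset (Fin n))) : Prop :=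
  ∃ A : Fin s → Finset (Fin n), (∀ i, A i ∈ F) ∧
    ∀ i j : Fin s, i ≠ j → Disjoint (A i) (A j)

/-- `F` is `s`-saturated: it has no matching of size `s`, and adding any set
not in `F` creates one. -/
def Saturated {n : ℕ} (s : ℕ) (F : Finset (Finset (Fin n))) : Prop :=
  ¬ HasMatching s F ∧ ∀ A : Finset (Fin n), A ∉ F → HasMatching s (insert A F)

/-- Disjoint occurrence of two families. -/
def box {n : ℕ} (𝒜 ℬ : Finset (Finset (Fin n))) : Finset (Finset (Fin n)) :=
  Finset.univ.filter fun S => ∃ a ∈ 𝒜, ∃ b ∈ ℬ, Disjoint a b ∧ S = a ∪ b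

/-- `boxPow U F m` is `F^{□m}` over ground set `U`: the family of unions of `m`
pairwise disjoint members of `F`, with `F^{□0} := 2^U`. -/
def boxPow {n : ℕ} (U : Finset (Fin n)) (F : Finset (Finset (Fin n))) :
    ℕ → Finset (Finset (Fin n))
  | 0 => U.powerset
  | (m+1) => U.powerset.filter fun S => ∃ A : Fin (m+1) → Finset (Fin n),
      (∀ i, A i ∈ F) ∧ (∀ i j : Fin (m+1), i ≠ j → Disjoint (A i) (A j)) ∧
      S = Finset.univ.sup A

/-- A family is increasing if it is closed under supersets. -/
def Increasing {n : ℕ} (F : Finset (Finset (Fin n))) : Prop :=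
  ∀ a ∈ F, ∀ b : Finset (Fin n), a ⊆ b → b ∈ F

/-- `S` is a disjoint union of (possibly zero) members of `F`. -/
def IsDisjUnionOf {n : ℕ} (F : Finset (Finset (Fin n))) (S : Finset (Fin n)) : Prop :=
  ∃ (m : ℕ) (A : Fin m → Finset (Fin n)), (∀ i, A i ∈ F) ∧
    (∀ i j : Fin m, i ≠ j → Disjoint (A i) (A j)) ∧ S = Finset.univ.sup A


lemma wEval {n : ℕ} (A B : Finset (Fin n)) (x : Fin n → Bool) :
    (∏ j ∈ A, (if x j then (1 : ℝ) else 0)) *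
      ∏ j ∈ B, (if x j then (0 : ℝ) else 1) =
    if (∀ j ∈ A, x j = true) ∧ (∀ j ∈ B, x j = false) then 1 else 0 := by
  split
  · rename_i h
    rw [Finset.prod_eq_one, Finset.prod_eq_one, one_mul]
    · intro j hj; simp [h.2 j hj]
    · intro j hj; simp [h.1 j hj]
  · rename_i h
    rw [not_and_or] at h
    rcases h with h | h
    · push_neg at h
      obtain ⟨j, hj, hxj⟩ := h
      rw [Finset.prod_eq_zero hj, zero_mul]
      simp [hxj]
    · push_neg at h
      obtain ⟨j, hj, hxj⟩ := h
      rw [Finset.prod_eq_zero hj (by simp [hxj]), mul_zero]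

/-- for an `s`-saturated `F` with `𝒢 := {[n] \ A : A ∉ F}` and
chosen decompositions `G = X_G ⊔ Y_G` into disjoint unions of members of `F`,
distinct `G₁, G₂ ∈ 𝒢` give distinct functions `w_{G₁} ≠ w_{G₂}`. -/
theorem wG_injective {n s : ℕ} (hn : 1 ≤ n) (hs : 2 ≤ s)
    (F : Finset (Finset (Fin n))) (hF : Saturated s F)
    (X Y : Finset (Fin n) → Finset (Fin n))
    (hXY : ∀ G ∈ Finset.univ.filter fun G : Finset (Fin n) => Gᶜ ∉ F,
      Disjoint (X G) (Y G) ∧ X G ∪ Y G = G ∧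
        IsDisjUnionOf F (X G) ∧ IsDisjUnionOf F (Y G)) :
    ∀ G₁ ∈ Finset.univ.filter fun G : Finset (Fin n) => Gᶜ ∉ F,
      ∀ G₂ ∈ Finset.univ.filter fun G : Finset (Fin n) => Gᶜ ∉ F,
        G₁ ≠ G₂ →
          (fun x : Fin n → Bool =>
              (∏ j ∈ X G₁, (if x j then (1 : ℝ) else 0)) *
                ∏ j ∈ Y G₁, (if x j then (0 : ℝ) else 1)) ≠
            (fun x : Fin n → Bool =>
              (∏ j ∈ X G₂, (if x j then (1 : ℝ) else 0)) *
                ∏ j ∈ Y G₂, (if x j then (0 : ℝ) else 1)) := by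
  intro G₁ hG₁ G₂ hG₂ hne heq
  obtain ⟨hd₁, hu₁, -, -⟩ := hXY G₁ hG₁
  obtain ⟨hd₂, hu₂, -, -⟩ := hXY G₂ hG₂
  have key : ∀ x : Fin n → Bool,
      ((∀ j ∈ X G₁, x j = true) ∧ (∀ j ∈ Y G₁, x j = false)) ↔
      ((∀ j ∈ X G₂, x j = true) ∧ (∀ j ∈ Y G₂, x j = false)) := by
    intro x
    have := congrFun heq x
    rw [wEval, wEval] at this
    constructor <;> intro h
    · by_contra h'
      rw [if_pos h, if_neg h'] at this; norm_num at this
    · by_contra h'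
      rw [if_neg h', if_pos h] at this; norm_num at this
  -- point 1 : characteristic vector of X G₁
  have p1 := (key (fun j => decide (j ∈ X G₁))).mp
    ⟨fun j hj => by simp [hj], fun j hj => by
      simp [Finset.disjoint_right.mp hd₁ hj]⟩
  -- point 2 : characteristic vector of X G₂
  have p2 := (key (fun j => decide (j ∈ X G₂))).mpr
    ⟨fun j hj => by simp [hj], fun j hj => by
      simp [Finset.disjoint_right.mp hd₂ hj]⟩
  have hX12 : X G₁ = X G₂ := by
    apply Finset.Subset.antisymm
    · intro j hj; simpa using p2.1 j hj
    · intro j hj; simpa using p1.1 j hj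
  -- point 3 : complement of Y G₁
  have p3 := (key (fun j => decide (j ∉ Y G₁))).mp
    ⟨fun j hj => by simp [Finset.disjoint_left.mp hd₁ hj], fun j hj => by simp [hj]⟩
  -- point 4 : complement of Y G₂
  have p4 := (key (fun j => decide (j ∉ Y G₂))).mpr
    ⟨fun j hj => by simp [Finset.disjoint_left.mp hd₂ hj], fun j hj => by simp [hj]⟩
  have hY12 : Y G₁ = Y G₂ := by
    apply Finset.Subset.antisymm
    · intro j hj
      have := p4.2 j hj; by_contra hc; simp [hc] at this
    · intro j hj
      have := p3.2 j hj; by_contra hc; simp [hc] at this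
  exact hne (by rw [← hu₁, ← hu₂, hX12, hY12])
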